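/- arXiv:2604.21589 — 2 statements merged into one kernel-verified Lean document; each statement's English description precedes it below -/
import Mathlib

section
/- Let G be a K3-free 1-plane graph of order n ≥ 4. Then A(G) ≥ 0, and A(G) = 0 holds if and only if every fake vertex z of the planarization G^× is incident with exactly two 3-faces and these two 3-faces are opposite around z (i.e., they share only the vertex z). -/
open SimpleGraph

/-- Reversal of darts, as a permutation of the darts of a graph. -/
def dartReversal {V : Type*} (G : SimpleGraph V) : Equiv.Perm G.Dart :=
  Function.Involutive.toPerm _ (Dart.symm_involutive (G := G))

/-- The face-traversal permutation of a rotation system `rot`: the dart following `d` on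
the boundary walk of the face to its left is `rot d.symm`. -/
def facePerm {V : Type*} (G : SimpleGraph V) (rot : Equiv.Perm G.Dart) :
    Equiv.Perm G.Dart :=
  (dartReversal G).trans rot

/-- The faces of a rotation system: the orbits of the face-traversal permutation, viewed
as sets of darts.  The degree of a face (the number of edge-occurrences on its boundary
walk) is the number of darts in the orbit, i.e. `F.ncard`; the occurrences of a vertex `w`
on the boundary walk of `F` correspond to the darts `d ∈ F` with tail `d.toProd.1 = w`. -/
def facesOf {V : Type*} (G : SimpleGraph V) (rot : Equiv.Perm G.Dart) :
    Set (Set G.Dart) :=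
  {F | ∃ d : G.Dart, F = {d' | (facePerm G rot).SameCycle d d'}}

/-- The face (orbit of the face-traversal permutation) containing a given dart. -/
def faceOf {V : Type*} (G : SimpleGraph V) (rot : Equiv.Perm G.Dart) (d : G.Dart) :
    Set G.Dart :=
  {d' | (facePerm G rot).SameCycle d d'}

/-- A plane graph structure (planar embedding) on a simple graph `G`, given combinatorially
by a rotation system: a permutation of the darts that fixes tails of darts and whose cycles
are precisely the sets of darts at each vertex, which satisfies Euler's formula (this is
exactly the condition that the embedding determined by the rotation system has genus zero,
i.e. is an embedding in the plane). -/
structure SimpleGraph.PlaneEmbedding {V : Type*} [Fintype V] (G : SimpleGraph V) where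
  /-- the rotation: the next dart (counterclockwise) around the tail vertex -/
  rot : Equiv.Perm G.Dart
  rot_fixes_tail : ∀ d : G.Dart, (rot d).toProd.1 = d.toProd.1
  rot_single_cycle : ∀ d d' : G.Dart, d.toProd.1 = d'.toProd.1 → rot.SameCycle d d'
  /-- Euler's formula, componentwise (components with no edge contribute `1` each, the
  others `2` each); equivalently, every component is embedded with genus zero. -/
  euler : (Fintype.card V : ℤ) - Nat.card G.edgeSet + (facesOf G rot).ncard =
    Nat.card G.ConnectedComponent +
      Nat.card {C : G.ConnectedComponent //
        ∃ d : G.Dart, G.connectedComponentMk d.toProd.1 = C}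
/-- Given a rotation system `rot` on a graph `H` whose vertices are the true vertices `V`
together with the fake vertices `X` (the crossings), `CrossPair rot x u v` says that the
darts from the fake vertex `x` towards `u` and towards `v` are opposite around `x` (i.e.
the segments `xu` and `xv` are the two halves of one original edge `uv` crossed at `x`). -/
def CrossPair {V X : Type*} {H : SimpleGraph (V ⊕ X)} (rot : Equiv.Perm H.Dart)
    (x : X) (u v : V) : Prop :=
  ∃ d : H.Dart, d.toProd = (Sum.inr x, Sum.inl u) ∧
    (rot (rot d)).toProd = (Sum.inr x, Sum.inl v)

/-- A 1-plane structure on a simple graph `G` (i.e. a 1-planar drawing of `G`, recorded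
combinatorially via its planarization): a plane embedding of a graph `H` on the vertex set
`V ⊕ X`, where `V` are the true vertices of `G` and `X` are the fake vertices (one for each
crossing of the drawing), such that every fake vertex has degree `4` (exactly two edges
cross at each crossing point), fake vertices are pairwise non-adjacent (each edge of `G` is
crossed at most once, so each half-edge at a crossing ends at a true vertex), and the edges
of `G` are exactly the uncrossed edges of `H` between true vertices together with, for each
fake vertex `x`, the two edges joining the two pairs of opposite neighbours of `x` (each
crossed edge of `G` being subdivided by exactly one fake vertex). -/
structure OnePlaneStructure {V X : Type*} [Fintype V] [Fintype X]
    (G : SimpleGraph V) (H : SimpleGraph (V ⊕ X)) where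
  /-- the plane embedding of the planarization `H = G^×` -/
  emb : H.PlaneEmbedding
  fake_degree : ∀ x : X, Nat.card {d : H.Dart // d.toProd.1 = Sum.inr x} = 4
  fake_not_adjacent : ∀ x y : X, ¬ H.Adj (Sum.inr x) (Sum.inr y)
  adj_iff : ∀ u v : V, G.Adj u v ↔
    (H.Adj (Sum.inl u) (Sum.inl v) ∨ ∃ x : X, CrossPair emb.rot x u v)
  uncrossed_not_crossed : ∀ u v : V, H.Adj (Sum.inl u) (Sum.inl v) →
    ∀ x : X, ¬ CrossPair emb.rot x u v
  cross_unique : ∀ (x x' : X) (u v : V),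
    CrossPair emb.rot x u v → CrossPair emb.rot x' u v → x = x'

namespace OnePlaneStructure

variable {V X : Type*} [Fintype V] [Fintype X] {G : SimpleGraph V}
  {H : SimpleGraph (V ⊕ X)}

/-- `a(z)`: the number of incidences, counted with multiplicity, of the fake vertex `z`
with the `4⁺`-faces of the planarization. -/
noncomputable def aVal (S : OnePlaneStructure G H) (z : X) : ℕ :=
  {d : H.Dart | d.toProd.1 = Sum.inr z ∧ 4 ≤ (faceOf H S.emb.rot d).ncard}.ncard

/-- `c(F)`: the number of occurrences of fake vertices on the boundary walk of `F`. -/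
noncomputable def cVal (F : Set H.Dart) : ℕ :=
  {d ∈ F | (d.toProd.1).isRight = true}.ncard

/-- `A(G) = Σ_{z fake} (a(z) − 2)` (as an integer). -/
noncomputable def AVal (S : OnePlaneStructure G H) : ℤ := ∑ z : X, ((S.aVal z : ℤ) - 2)

end OnePlaneStructure

section AuxPerm

private lemma orbit_subset_of_pow {α : Type*} [DecidableEq α] (f : Equiv.Perm α) (d : α) (n : ℕ)
    (hn : 0 < n) (h : (f ^ n) d = d) :
    {d' | f.SameCycle d d'} ⊆ ↑((Finset.range n).image (fun k => (f ^ k) d)) := by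
  rintro d' ⟨i, rfl⟩
  have hfix : ∀ q : ℤ, ((f ^ (n : ℤ)) ^ q) d = d :=
    Equiv.Perm.zpow_apply_eq_self_of_apply_eq_self (by simpa [zpow_natCast] using h)
  have key : (f ^ i) d = (f ^ (i % (n : ℤ))) d := by
    conv_lhs => rw [← Int.emod_add_mul_ediv i (n : ℤ)]
    rw [zpow_add, Equiv.Perm.mul_apply, zpow_mul, hfix]
  have h0 : 0 ≤ i % (n : ℤ) := Int.emod_nonneg i (by exact_mod_cast hn.ne')
  have h1 : i % (n : ℤ) < n := Int.emod_lt_of_pos i (by exact_mod_cast hn)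
  simp only [Finset.coe_image, Set.mem_image, Finset.mem_coe, Finset.mem_range]
  refine ⟨(i % (n : ℤ)).toNat, by omega, ?_⟩
  rw [← zpow_natCast, Int.toNat_of_nonneg h0]
  exact key.symm

private lemma orbit_ncard_le {α : Type*} (f : Equiv.Perm α) (d : α) (n : ℕ)
    (hn : 0 < n) (h : (f ^ n) d = d) : {d' | f.SameCycle d d'}.ncard ≤ n := by
  classical
  calc {d' | f.SameCycle d d'}.ncard
      ≤ ((((Finset.range n).image (fun k => (f ^ k) d)) : Finset α) : Set α).ncard :=
        Set.ncard_le_ncard (orbit_subset_of_pow f d n hn h) (Finset.finite_toSet _)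
    _ = ((Finset.range n).image (fun k => (f ^ k) d)).card := Set.ncard_coe_finset _
    _ ≤ n := le_trans Finset.card_image_le (by simp)

private lemma orbit_mem_cases {α : Type*} (f : Equiv.Perm α) (d e : α)
    (h : (f ^ 3) d = d) (he : f.SameCycle d e) : e = d ∨ e = f d ∨ e = f (f d) := by
  classical
  have := orbit_subset_of_pow f d 3 (by norm_num) h he
  simp only [Finset.coe_image, Set.mem_image, Finset.mem_coe, Finset.mem_range] at this
  obtain ⟨k, hk, rfl⟩ := this
  interval_cases k
  · left; simp
  · right; left; simp
  · right; right; simp [pow_succ, Equiv.Perm.mul_apply]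

private lemma sameCycle_nat_pow {α : Type*} (f : Equiv.Perm α) (d : α) (k : ℕ) :
    f.SameCycle d ((f ^ k) d) := ⟨(k : ℤ), by simp [zpow_natCast]⟩

private lemma orbit_cube {α : Type*} [Finite α] (f : Equiv.Perm α) (d : α)
    (h : {d' | f.SameCycle d d'}.ncard = 3) : f (f (f d)) = d := by
  by_contra h3
  have h1 : f d ≠ d := by
    intro he
    have := orbit_ncard_le f d 1 one_pos (by simpa using he)
    omega
  have h2 : f (f d) ≠ d := by
    intro he
    have := orbit_ncard_le f d 2 two_pos (by simpa [pow_succ, Equiv.Perm.mul_apply] using he)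
    omega
  have h21 : f (f d) ≠ f d := fun he => h1 (f.injective he)
  have h31 : f (f (f d)) ≠ f d := fun he => h2 (f.injective he)
  have h32 : f (f (f d)) ≠ f (f d) := fun he => h1 (f.injective (f.injective he))
  have hsub : ({d, f d, f (f d), f (f (f d))} : Set α) ⊆ {d' | f.SameCycle d d'} := by
    rintro e (rfl | rfl | rfl | rfl)
    · exact Equiv.Perm.SameCycle.refl f e
    · simpa using sameCycle_nat_pow f d 1
    · simpa [pow_succ, Equiv.Perm.mul_apply] using sameCycle_nat_pow f d 2
    · simpa [pow_succ, Equiv.Perm.mul_apply] using sameCycle_nat_pow f d 3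
  have h4 : ({d, f d, f (f d), f (f (f d))} : Set α).ncard = 4 := by
    rw [Set.ncard_insert_of_notMem (by
      simp only [Set.mem_insert_iff, Set.mem_singleton_iff]
      push_neg
      exact ⟨fun h => h1 h.symm, fun h => h2 h.symm, fun h => h3 h.symm⟩)]
    rw [Set.ncard_insert_of_notMem (by
      simp only [Set.mem_insert_iff, Set.mem_singleton_iff]
      push_neg
      exact ⟨fun h => h21 h.symm, fun h => h31 h.symm⟩)]
    rw [Set.ncard_pair h32.symm]
  have := Set.ncard_le_ncard hsub (Set.toFinite _)
  omega

end AuxPerm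

section AuxGraph

instance dartFiniteOfFinite {W : Type*} [Finite W] {Hw : SimpleGraph W} : Finite Hw.Dart :=
  Finite.of_injective _ Dart.toProd_injective

variable {V X : Type*} [Fintype V] [Fintype X] {G : SimpleGraph V} {H : SimpleGraph (V ⊕ X)}

private lemma facePerm_apply (rot : Equiv.Perm H.Dart) (d : H.Dart) :
    facePerm H rot d = rot d.symm := rfl

private lemma tail_facePerm (rot : Equiv.Perm H.Dart)
    (hrot : ∀ d : H.Dart, (rot d).toProd.1 = d.toProd.1) (d : H.Dart) :
    (facePerm H rot d).toProd.1 = d.toProd.2 := by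
  rw [facePerm_apply, hrot, Dart.symm_toProd, Prod.fst_swap]

private lemma faceOf_eq_of_mem (rot : Equiv.Perm H.Dart) {d e : H.Dart}
    (he : e ∈ faceOf H rot d) : faceOf H rot e = faceOf H rot d :=
  Set.ext fun x => ⟨fun hx => Equiv.Perm.SameCycle.trans he hx,
    fun hx => Equiv.Perm.SameCycle.trans (Equiv.Perm.SameCycle.symm he) hx⟩

private lemma mem_face_cases (rot : Equiv.Perm H.Dart) {d e : H.Dart}
    (hc : facePerm H rot (facePerm H rot (facePerm H rot d)) = d)
    (he : e ∈ faceOf H rot d) :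
    e = d ∨ e = facePerm H rot d ∨ e = facePerm H rot (facePerm H rot d) :=
  orbit_mem_cases _ _ _ (by simpa [pow_succ, Equiv.Perm.mul_apply] using hc) he

private lemma tail_inj_threeface (rot : Equiv.Perm H.Dart)
    (hrot : ∀ d : H.Dart, (rot d).toProd.1 = d.toProd.1) {d e e' : H.Dart}
    (hc : facePerm H rot (facePerm H rot (facePerm H rot d)) = d)
    (he : e ∈ faceOf H rot d) (he' : e' ∈ faceOf H rot d)
    (ht : e.toProd.1 = e'.toProd.1) : e = e' := by
  have t1 : (facePerm H rot d).toProd.1 = d.toProd.2 := tail_facePerm rot hrot d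
  have t2 : (facePerm H rot (facePerm H rot d)).toProd.1 = (facePerm H rot d).toProd.2 :=
    tail_facePerm rot hrot _
  have t3 : d.toProd.1 = (facePerm H rot (facePerm H rot d)).toProd.2 := by
    have h := tail_facePerm rot hrot (facePerm H rot (facePerm H rot d))
    rw [hc] at h
    exact h
  rcases mem_face_cases rot hc he with h | h | h <;>
    rcases mem_face_cases rot hc he' with h' | h' | h' <;>
    rw [h, h'] at ht ⊢
  · exact absurd (ht.trans t1) d.adj.ne
  · exact absurd (ht.symm.trans t3) (facePerm H rot (facePerm H rot d)).adj.ne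
  · exact absurd (ht.symm.trans t1) d.adj.ne
  · exact absurd (ht.trans t2) (facePerm H rot d).adj.ne
  · exact absurd (ht.trans t3) (facePerm H rot (facePerm H rot d)).adj.ne
  · exact absurd (ht.symm.trans t2) (facePerm H rot d).adj.ne

end AuxGraph

namespace OnePlaneStructure

variable {V X : Type*} [Fintype V] [Fintype X] {G : SimpleGraph V} {H : SimpleGraph (V ⊕ X)}
variable (S : OnePlaneStructure G H)

include S in
private lemma head_true (z : X) (e : H.Dart) (he : e.toProd.1 = Sum.inr z) :
    ∃ u : V, e.toProd.2 = Sum.inl u := by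
  rcases hu : e.toProd.2 with u | y
  · exact ⟨u, rfl⟩
  · have hadj := e.adj
    rw [he, hu] at hadj
    exact absurd hadj (S.fake_not_adjacent z y)

private lemma tail_rotInv (d : H.Dart) :
    ((S.emb.rot)⁻¹ d).toProd.1 = d.toProd.1 := by
  conv_rhs => rw [← Equiv.apply_symm_apply S.emb.rot d]
  rw [S.emb.rot_fixes_tail]
  rfl

private lemma cube_of_three {d : H.Dart} (h : (faceOf H S.emb.rot d).ncard = 3) :
    facePerm H S.emb.rot (facePerm H S.emb.rot (facePerm H S.emb.rot d)) = d :=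
  orbit_cube _ _ h

private lemma f2_eq {d : H.Dart}
    (hc : facePerm H S.emb.rot (facePerm H S.emb.rot (facePerm H S.emb.rot d)) = d) :
    facePerm H S.emb.rot (facePerm H S.emb.rot d) = ((S.emb.rot)⁻¹ d).symm := by
  have h1 : S.emb.rot (facePerm H S.emb.rot (facePerm H S.emb.rot d)).symm = d := by
    rw [← facePerm_apply]; exact hc
  have h2 : (facePerm H S.emb.rot (facePerm H S.emb.rot d)).symm = (S.emb.rot)⁻¹ d :=
    S.emb.rot.injective (by rw [Equiv.Perm.inv_def, Equiv.apply_symm_apply]; exact h1)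
  rw [← h2, Dart.symm_symm]

private lemma three_le_face (z : X) {d : H.Dart} (hd : d.toProd.1 = Sum.inr z) :
    3 ≤ (faceOf H S.emb.rot d).ncard := by
  set f := facePerm H S.emb.rot with hf
  have hrot := S.emb.rot_fixes_tail
  have hm0 : d ∈ faceOf H S.emb.rot d := Equiv.Perm.SameCycle.refl f d
  have hm1 : f d ∈ faceOf H S.emb.rot d := by
    have h := sameCycle_nat_pow f d 1
    rw [pow_one] at h
    exact h
  have hm2 : f (f d) ∈ faceOf H S.emb.rot d := by
    have h := sameCycle_nat_pow f d 2
    rw [pow_succ, pow_one, Equiv.Perm.mul_apply] at h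
    exact h
  by_contra hlt
  push_neg at hlt
  have q1 : f d ≠ d := by
    intro he
    have t1 : (f d).toProd.1 = d.toProd.2 := tail_facePerm _ hrot d
    rw [he] at t1
    exact d.adj.ne t1
  have q2 : f (f d) ≠ f d := fun he => q1 (f.injective he)
  have q3 : f (f d) ≠ d := by
    intro he
    -- then f d = d.symm and rot d = d
    have t1 : (f d).toProd.1 = d.toProd.2 := tail_facePerm _ hrot d
    have t2 : (f (f d)).toProd.1 = (f d).toProd.2 := tail_facePerm _ hrot (f d)
    rw [he] at t2
    have hfd : f d = d.symm := by
      apply Dart.ext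
      rw [Dart.symm_toProd]
      exact Prod.ext t1 t2.symm
    have hrd : S.emb.rot d = d := by
      have : f (f d) = S.emb.rot d := by
        rw [hf]
        conv_lhs => rw [facePerm_apply, hfd, Dart.symm_symm]
      rw [← this, he]
    have hcard := S.fake_degree z
    have hnt : Nontrivial {d' : H.Dart // d'.toProd.1 = Sum.inr z} := by
      rw [← Finite.one_lt_card_iff_nontrivial]; omega
    obtain ⟨d', hd'⟩ := exists_ne (⟨d, hd⟩ : {d' : H.Dart // d'.toProd.1 = Sum.inr z})
    obtain ⟨i, hi⟩ := S.emb.rot_single_cycle d d'.1 (hd.trans d'.2.symm)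
    rw [Equiv.Perm.zpow_apply_eq_self_of_apply_eq_self hrd i] at hi
    exact hd' (Subtype.ext hi.symm)
  have hcard3 : ({d, f d, f (f d)} : Set H.Dart).ncard = 3 := by
    rw [Set.ncard_insert_of_notMem (by
      simp only [Set.mem_insert_iff, Set.mem_singleton_iff]
      push_neg
      exact ⟨fun h => q1 h.symm, fun h => q3 h.symm⟩)]
    rw [Set.ncard_pair q2.symm]
  have hsub : ({d, f d, f (f d)} : Set H.Dart) ⊆ faceOf H S.emb.rot d := by
    rintro e (rfl | rfl | rfl)
    · exact hm0
    · exact hm1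
    · exact hm2
  have := Set.ncard_le_ncard hsub (Set.toFinite _)
  omega

private lemma not_both (hK3 : G.CliqueFree 3) (z : X) {d : H.Dart}
    (hd : d.toProd.1 = Sum.inr z)
    (h1 : (faceOf H S.emb.rot d).ncard = 3)
    (h2 : (faceOf H S.emb.rot (S.emb.rot d)).ncard = 3) : False := by
  classical
  have hrot := S.emb.rot_fixes_tail
  have hd' : (S.emb.rot d).toProd.1 = Sum.inr z := (hrot d).trans hd
  have hdi : ((S.emb.rot)⁻¹ d).toProd.1 = Sum.inr z := (tail_rotInv S d).trans hd
  obtain ⟨u1, hu1⟩ := head_true S z _ hdi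
  obtain ⟨u2, hu2⟩ := head_true S z _ hd
  obtain ⟨u3, hu3⟩ := head_true S z _ hd'
  have hc1 := cube_of_three S h1
  have hc2 := cube_of_three S h2
  have hf21 := f2_eq S hc1
  have hf22 := f2_eq S hc2
  rw [Equiv.Perm.inv_def, Equiv.symm_apply_apply] at hf22
  have A21 : H.Adj (Sum.inl u2) (Sum.inl u1) := by
    have hadj := (facePerm H S.emb.rot d).adj
    have e1 : (facePerm H S.emb.rot d).toProd.1 = Sum.inl u2 :=
      (tail_facePerm _ hrot d).trans hu2
    have e2 : (facePerm H S.emb.rot d).toProd.2 = Sum.inl u1 := by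
      have h := tail_facePerm _ hrot (facePerm H S.emb.rot d)
      rw [hf21, Dart.symm_toProd, Prod.fst_swap, hu1] at h
      exact h.symm
    rwa [e1, e2] at hadj
  have A32 : H.Adj (Sum.inl u3) (Sum.inl u2) := by
    have hadj := (facePerm H S.emb.rot (S.emb.rot d)).adj
    have e1 : (facePerm H S.emb.rot (S.emb.rot d)).toProd.1 = Sum.inl u3 :=
      (tail_facePerm _ hrot _).trans hu3
    have e2 : (facePerm H S.emb.rot (S.emb.rot d)).toProd.2 = Sum.inl u2 := by
      have h := tail_facePerm _ hrot (facePerm H S.emb.rot (S.emb.rot d))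
      rw [hf22, Dart.symm_toProd, Prod.fst_swap, hu2] at h
      exact h.symm
    rwa [e1, e2] at hadj
  have G21 : G.Adj u2 u1 := (S.adj_iff u2 u1).2 (Or.inl A21)
  have G32 : G.Adj u3 u2 := (S.adj_iff u3 u2).2 (Or.inl A32)
  have G13 : G.Adj u1 u3 := by
    refine (S.adj_iff u1 u3).2 (Or.inr ⟨z, ⟨(S.emb.rot)⁻¹ d, ?_, ?_⟩⟩)
    · exact Prod.ext hdi hu1
    · rw [Equiv.Perm.inv_def, Equiv.apply_symm_apply]
      exact Prod.ext hd' hu3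
  exact hK3 {u1, u2, u3} (SimpleGraph.is3Clique_triple_iff.2 ⟨G21.symm, G13, G32.symm⟩)

/-- The set of darts at `z` lying in `3`-faces. -/
private def Tset (S : OnePlaneStructure G H) (z : X) : Set H.Dart :=
  {d : H.Dart | d.toProd.1 = Sum.inr z ∧ (faceOf H S.emb.rot d).ncard = 3}

include S in
private lemma Dset_ncard (z : X) :
    ({d : H.Dart | d.toProd.1 = Sum.inr z} : Set H.Dart).ncard = 4 := by
  rw [← Nat.card_coe_set_eq]
  exact S.fake_degree z

private lemma count_four (z : X) : S.aVal z + (Tset S z).ncard = 4 := by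
  have hD := Dset_ncard S z
  have hunion : {d : H.Dart | d.toProd.1 = Sum.inr z ∧ 4 ≤ (faceOf H S.emb.rot d).ncard}
      ∪ Tset S z = {d : H.Dart | d.toProd.1 = Sum.inr z} := by
    ext d
    constructor
    · rintro (⟨h, _⟩ | ⟨h, _⟩) <;> exact h
    · intro h
      have h3 := three_le_face S z h
      rcases eq_or_lt_of_le h3 with he | hl
      · exact Or.inr ⟨h, he.symm⟩
      · exact Or.inl ⟨h, hl⟩
  have hdisj : Disjoint
      {d : H.Dart | d.toProd.1 = Sum.inr z ∧ 4 ≤ (faceOf H S.emb.rot d).ncard}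
      (Tset S z) := by
    rw [Set.disjoint_left]
    rintro d ⟨_, h4⟩ ⟨_, h3⟩
    omega
  have hu := Set.ncard_union_eq hdisj (Set.toFinite _) (Set.toFinite _)
  rw [hunion] at hu
  have ha : S.aVal z =
      {d : H.Dart | d.toProd.1 = Sum.inr z ∧ 4 ≤ (faceOf H S.emb.rot d).ncard}.ncard := rfl
  omega

private lemma T_le_two (hK3 : G.CliqueFree 3) (z : X) : (Tset S z).ncard ≤ 2 := by
  have hsub : Tset S z ⊆ {d : H.Dart | d.toProd.1 = Sum.inr z} := fun d hd => hd.1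
  have hD := Dset_ncard S z
  have hmaps : ∀ d ∈ Tset S z,
      S.emb.rot d ∈ {d : H.Dart | d.toProd.1 = Sum.inr z} \ Tset S z := by
    rintro d ⟨hdz, hd3⟩
    refine ⟨(S.emb.rot_fixes_tail d).trans hdz, fun hmem => ?_⟩
    exact not_both S hK3 z hdz hd3 hmem.2
  have h1 : (Tset S z).ncard ≤ (({d : H.Dart | d.toProd.1 = Sum.inr z} \ Tset S z)).ncard :=
    Set.ncard_le_ncard_of_injOn _ hmaps (S.emb.rot.injective.injOn) (Set.toFinite _)
  have h2 := Set.ncard_diff hsub (Set.toFinite _)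
  have h3 : (Tset S z).ncard ≤ 4 := hD ▸ Set.ncard_le_ncard hsub (Set.toFinite _)
  omega

private lemma aVal_ge_two (hK3 : G.CliqueFree 3) (z : X) : 2 ≤ S.aVal z := by
  have := count_four S z
  have := T_le_two S hK3 z
  omega

end OnePlaneStructure

namespace OnePlaneStructure

variable {V X : Type*} [Fintype V] [Fintype X] {G : SimpleGraph V} {H : SimpleGraph (V ⊕ X)}
variable (S : OnePlaneStructure G H)

private lemma aVal_eq_two_iff (hK3 : G.CliqueFree 3) (z : X) :
    S.aVal z = 2 ↔ ∃ F₁ F₂ : Set H.Dart,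
      F₁ ∈ facesOf H S.emb.rot ∧ F₂ ∈ facesOf H S.emb.rot ∧ F₁ ≠ F₂ ∧
      F₁.ncard = 3 ∧ F₂.ncard = 3 ∧
      (∃ d ∈ F₁, d.toProd.1 = Sum.inr z) ∧ (∃ d ∈ F₂, d.toProd.1 = Sum.inr z) ∧
      (∀ w : V ⊕ X, (∃ d ∈ F₁, d.toProd.1 = w) → (∃ d ∈ F₂, d.toProd.1 = w) →
        w = Sum.inr z) ∧
      (∀ F ∈ facesOf H S.emb.rot, F.ncard = 3 → (∃ d ∈ F, d.toProd.1 = Sum.inr z) →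
        F = F₁ ∨ F = F₂) := by
  have hrot := S.emb.rot_fixes_tail
  constructor
  · intro h2
    have hc4 := count_four S z
    have hT : (Tset S z).ncard = 2 := by omega
    obtain ⟨d1, d2, hne, hTeq⟩ := Set.ncard_eq_two.1 hT
    have hd1 : d1 ∈ Tset S z := by rw [hTeq]; exact Set.mem_insert _ _
    have hd2 : d2 ∈ Tset S z := by rw [hTeq]; exact Set.mem_insert_of_mem _ rfl
    obtain ⟨hz1, h31⟩ := hd1
    obtain ⟨hz2, h32⟩ := hd2
    have hc1 := cube_of_three S h31
    have hc2 := cube_of_three S h32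
    have hm1 : d1 ∈ faceOf H S.emb.rot d1 := Equiv.Perm.SameCycle.refl _ _
    have hm2 : d2 ∈ faceOf H S.emb.rot d2 := Equiv.Perm.SameCycle.refl _ _
    have hzi1 : ((S.emb.rot)⁻¹ d1).toProd.1 = Sum.inr z := (tail_rotInv S d1).trans hz1
    have hzi2 : ((S.emb.rot)⁻¹ d2).toProd.1 = Sum.inr z := (tail_rotInv S d2).trans hz2
    have tf1 : (facePerm H S.emb.rot d1).toProd.1 = d1.toProd.2 := tail_facePerm _ hrot d1
    have tf2 : (facePerm H S.emb.rot d2).toProd.1 = d2.toProd.2 := tail_facePerm _ hrot d2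
    have tff1 : (facePerm H S.emb.rot (facePerm H S.emb.rot d1)).toProd.1
        = ((S.emb.rot)⁻¹ d1).toProd.2 := by
      rw [f2_eq S hc1, Dart.symm_toProd, Prod.fst_swap]
    have tff2 : (facePerm H S.emb.rot (facePerm H S.emb.rot d2)).toProd.1
        = ((S.emb.rot)⁻¹ d2).toProd.2 := by
      rw [f2_eq S hc2, Dart.symm_toProd, Prod.fst_swap]
    refine ⟨faceOf H S.emb.rot d1, faceOf H S.emb.rot d2, ⟨d1, rfl⟩, ⟨d2, rfl⟩, ?_,
      h31, h32, ⟨d1, hm1, hz1⟩, ⟨d2, hm2, hz2⟩, ?_, ?_⟩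
    · intro hFeq
      have hd2m : d2 ∈ faceOf H S.emb.rot d1 := by rw [hFeq]; exact hm2
      exact hne (tail_inj_threeface _ hrot hc1 hm1 hd2m (hz1.trans hz2.symm))
    · rintro w ⟨e1, he1, hw1⟩ ⟨e2, he2, hw2⟩
      rcases mem_face_cases _ hc1 he1 with rfl | rfl | rfl
      · rw [← hw1]; exact hz1
      · rcases mem_face_cases _ hc2 he2 with rfl | rfl | rfl
        · rw [← hw2]; exact hz2
        · -- head d1 = head d2
          exfalso
          apply hne
          apply Dart.ext
          exact Prod.ext (hz1.trans hz2.symm) ((tf1.symm.trans hw1).trans (hw2.symm.trans tf2))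
        · -- head d1 = head (rot⁻¹ d2), so rot d1 = d2
          exfalso
          have hed : d1 = (S.emb.rot)⁻¹ d2 := by
            apply Dart.ext
            exact Prod.ext (hz1.trans hzi2.symm)
              ((tf1.symm.trans hw1).trans (hw2.symm.trans tff2))
          have hrd : S.emb.rot d1 = d2 := by rw [hed, Equiv.Perm.inv_def, Equiv.apply_symm_apply]
          exact not_both S hK3 z hz1 h31 (by rw [hrd]; exact h32)
      · rcases mem_face_cases _ hc2 he2 with rfl | rfl | rfl
        · rw [← hw2]; exact hz2
        · -- head (rot⁻¹ d1) = head d2, so rot d2 = d1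
          exfalso
          have hed : d2 = (S.emb.rot)⁻¹ d1 := by
            apply Dart.ext
            exact Prod.ext (hz2.trans hzi1.symm)
              ((tf2.symm.trans hw2).trans (hw1.symm.trans tff1))
          have hrd : S.emb.rot d2 = d1 := by rw [hed, Equiv.Perm.inv_def, Equiv.apply_symm_apply]
          exact not_both S hK3 z hz2 h32 (by rw [hrd]; exact h31)
        · -- rot⁻¹ d1 = rot⁻¹ d2
          exfalso
          apply hne
          have : (S.emb.rot)⁻¹ d1 = (S.emb.rot)⁻¹ d2 := by
            apply Dart.ext
            exact Prod.ext (hzi1.trans hzi2.symm)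
              ((tff1.symm.trans hw1).trans (hw2.symm.trans tff2))
          exact (S.emb.rot)⁻¹.injective this
    · rintro F ⟨d0, rfl⟩ h3F ⟨e, heF, hez⟩
      have hFe : faceOf H S.emb.rot e = faceOf H S.emb.rot d0 := faceOf_eq_of_mem _ heF
      have h3e : (faceOf H S.emb.rot e).ncard = 3 := by rw [hFe]; exact h3F
      have heT : e ∈ Tset S z := ⟨hez, h3e⟩
      rw [hTeq] at heT
      simp only [Set.mem_insert_iff, Set.mem_singleton_iff] at heT
      rcases heT with rfl | rfl
      · exact Or.inl hFe.symm
      · exact Or.inr hFe.symm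
  · rintro ⟨F1, F2, hF1, hF2, hFne, h31, h32, ⟨e1, he1, hz1⟩, ⟨e2, he2, hz2⟩, _, huniq⟩
    obtain ⟨a1, rfl⟩ := hF1
    obtain ⟨a2, rfl⟩ := hF2
    have hE1 : faceOf H S.emb.rot e1 = faceOf H S.emb.rot a1 := faceOf_eq_of_mem _ he1
    have hE2 : faceOf H S.emb.rot e2 = faceOf H S.emb.rot a2 := faceOf_eq_of_mem _ he2
    have h3e1 : (faceOf H S.emb.rot e1).ncard = 3 := by rw [hE1]; exact h31
    have h3e2 : (faceOf H S.emb.rot e2).ncard = 3 := by rw [hE2]; exact h32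
    have hT1 : e1 ∈ Tset S z := ⟨hz1, h3e1⟩
    have hT2 : e2 ∈ Tset S z := ⟨hz2, h3e2⟩
    have hne12 : e1 ≠ e2 := by
      rintro rfl
      exact hFne (hE1.symm.trans hE2)
    have hc1 := cube_of_three S (show (faceOf H S.emb.rot a1).ncard = 3 from h31)
    have hc2 := cube_of_three S (show (faceOf H S.emb.rot a2).ncard = 3 from h32)
    have hTeq : Tset S z = {e1, e2} := by
      apply Set.Subset.antisymm
      · rintro d' ⟨hz', h3'⟩
        rcases huniq (faceOf H S.emb.rot d') ⟨d', rfl⟩ h3'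
            ⟨d', Equiv.Perm.SameCycle.refl _ _, hz'⟩ with hq | hq
        · left
          have hd'm : d' ∈ faceOf H S.emb.rot a1 := by
            have h0 : d' ∈ faceOf H S.emb.rot d' := Equiv.Perm.SameCycle.refl _ _
            rw [hq] at h0
            exact h0
          exact tail_inj_threeface _ (S.emb.rot_fixes_tail) hc1 hd'm he1
            (hz'.trans hz1.symm)
        · right
          have hd'm : d' ∈ faceOf H S.emb.rot a2 := by
            have h0 : d' ∈ faceOf H S.emb.rot d' := Equiv.Perm.SameCycle.refl _ _
            rw [hq] at h0
            exact h0
          exact tail_inj_threeface _ (S.emb.rot_fixes_tail) hc2 hd'm he2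
            (hz'.trans hz2.symm)
      · rintro x (rfl | rfl)
        · exact hT1
        · exact hT2
    have hTcard : (Tset S z).ncard = 2 := by rw [hTeq]; exact Set.ncard_pair hne12
    have := count_four S z
    omega

end OnePlaneStructure

/-- Let `G` be a `K₃`-free 1-plane graph of order `n ≥ 4`.  Then `A(G) ≥ 0`, and `A(G) = 0`
holds if and only if every fake vertex `z` of the planarization `G^×` is incident with
exactly two `3`-faces, and these two `3`-faces are opposite around `z` (they share only the
vertex `z`). -/
theorem k3free_one_plane_A_nonneg {V X : Type*} [Fintype V] [Fintype X]
    (G : SimpleGraph V) (H : SimpleGraph (V ⊕ X)) (S : OnePlaneStructure G H)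
    (hn : 4 ≤ Fintype.card V) (hK3 : G.CliqueFree 3) :
    0 ≤ S.AVal ∧
      (S.AVal = 0 ↔ ∀ z : X, ∃ F₁ F₂ : Set H.Dart,
        F₁ ∈ facesOf H S.emb.rot ∧ F₂ ∈ facesOf H S.emb.rot ∧ F₁ ≠ F₂ ∧
        F₁.ncard = 3 ∧ F₂.ncard = 3 ∧
        (∃ d ∈ F₁, d.toProd.1 = Sum.inr z) ∧ (∃ d ∈ F₂, d.toProd.1 = Sum.inr z) ∧
        (∀ w : V ⊕ X, (∃ d ∈ F₁, d.toProd.1 = w) → (∃ d ∈ F₂, d.toProd.1 = w) →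
          w = Sum.inr z) ∧
        (∀ F ∈ facesOf H S.emb.rot, F.ncard = 3 → (∃ d ∈ F, d.toProd.1 = Sum.inr z) →
          F = F₁ ∨ F = F₂)) := by
  classical
  have hnn : ∀ z ∈ Finset.univ (α := X), 0 ≤ (S.aVal z : ℤ) - 2 := by
    intro z _
    have h2 := S.aVal_ge_two hK3 z
    have h2' : (2:ℤ) ≤ (S.aVal z : ℤ) := by exact_mod_cast h2
    linarith
  constructor
  · exact Finset.sum_nonneg hnn
  · rw [show S.AVal = ∑ z : X, ((S.aVal z : ℤ) - 2) from rfl,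
      Finset.sum_eq_zero_iff_of_nonneg hnn]
    constructor
    · intro hall z
      have hz := hall z (Finset.mem_univ z)
      have h2 : S.aVal z = 2 := by
        have h2' : (S.aVal z : ℤ) = 2 := by linarith
        exact_mod_cast h2'
      exact (S.aVal_eq_two_iff hK3 z).1 h2
    · intro hall z _
      have h2 := (S.aVal_eq_two_iff hK3 z).2 (hall z)
      rw [h2]
      ring
end

section
/- Let G be a K4-free 1-plane graph of order n ≥ 3. Then A(G) ≥ −x, where x is the number of fake vertices of the planarization G^× (equivalently, the number of crossings in the drawing); in particular, a(z) ≥ 1 for every fake vertex z of G^×. -/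
open SimpleGraph

section Helpers

variable {W : Type*} {K : SimpleGraph W}

lemma tail_pow_eq (rot : Equiv.Perm K.Dart)
    (h : ∀ d : K.Dart, (rot d).toProd.1 = d.toProd.1) :
    ∀ (n : ℕ) (d : K.Dart), ((rot ^ n) d).toProd.1 = d.toProd.1 := by
  intro n
  induction n with
  | zero => intro d; simp
  | succ k ih =>
      intro d
      rw [pow_succ, Equiv.Perm.mul_apply, ih, h]

lemma tail_zpow_eq (rot : Equiv.Perm K.Dart)
    (h : ∀ d : K.Dart, (rot d).toProd.1 = d.toProd.1) :
    ∀ (m : ℤ) (d : K.Dart), ((rot ^ m) d).toProd.1 = d.toProd.1 := by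
  intro m d
  rcases m with n | n
  · rw [Int.ofNat_eq_coe, zpow_natCast]; exact tail_pow_eq rot h n d
  · rw [zpow_negSucc]
    have : ((rot ^ (n + 1)) (((rot ^ (n + 1))⁻¹) d)).toProd.1
        = (((rot ^ (n + 1))⁻¹) d).toProd.1 := tail_pow_eq rot h (n + 1) _
    rw [Equiv.Perm.inv_def, Equiv.apply_symm_apply] at this; exact this.symm

end Helpers

/-- Let `G` be a `K₄`-free 1-plane graph of order `n ≥ 3`.  Then `A(G) ≥ −x`, where `x` is
the number of fake vertices of the planarization `G^×` (the number of crossings of the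
drawing); in particular `a(z) ≥ 1` for every fake vertex `z`. -/
theorem k4free_one_plane_A_lower_bound {V X : Type*} [Fintype V] [Fintype X]
    (G : SimpleGraph V) (H : SimpleGraph (V ⊕ X)) (S : OnePlaneStructure G H)
    (hn : 3 ≤ Fintype.card V) (hK4 : G.CliqueFree 4) :
    -(Fintype.card X : ℤ) ≤ S.AVal ∧ ∀ z : X, 1 ≤ S.aVal z := by
  classical
  haveI : Finite H.Dart := Finite.of_injective _ (Dart.toProd_injective (G := H))
  haveI : Fintype H.Dart := Fintype.ofFinite _
  set rot := S.emb.rot with hrotdef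
  have htail : ∀ d : H.Dart, (rot d).toProd.1 = d.toProd.1 := S.emb.rot_fixes_tail
  have htailz : ∀ (m : ℤ) (d : H.Dart), ((rot ^ m) d).toProd.1 = d.toProd.1 :=
    tail_zpow_eq rot htail
  set σ := facePerm H rot with hσdef
  have hσapp : ∀ e : H.Dart, σ e = rot e.symm := fun e => rfl
  have hσne : ∀ d : H.Dart, σ d ≠ d := by
    intro d hdd
    have h1 : (σ d).toProd.1 = d.toProd.2 := by
      rw [hσapp, htail, Dart.symm_toProd]; rfl
    rw [hdd] at h1
    exact H.ne_of_adj d.adj h1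
  have key : ∀ z : X, 1 ≤ S.aVal z := by
    intro z
    by_contra hza
    push_neg at hza
    have h0 : S.aVal z = 0 := Nat.lt_one_iff.mp hza
    have hempty :
        {d : H.Dart | d.toProd.1 = Sum.inr z ∧ 4 ≤ (faceOf H S.emb.rot d).ncard} = ∅ :=
      (Set.ncard_eq_zero (Set.toFinite _)).mp h0
    have hface : ∀ d : H.Dart, d.toProd.1 = Sum.inr z →
        (faceOf H rot d).ncard ≤ 3 := by
      intro d hd
      by_contra hle
      push_neg at hle
      have : d ∈ ({d : H.Dart | d.toProd.1 = Sum.inr z ∧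
          4 ≤ (faceOf H S.emb.rot d).ncard}) := ⟨hd, hle⟩
      rw [hempty] at this
      exact this
    -- the set of darts at z
    set T : Set H.Dart := {d | d.toProd.1 = Sum.inr z} with hTdef
    have hT4 : T.ncard = 4 := by
      rw [← Nat.card_coe_set_eq]
      exact S.fake_degree z
    have hTne : T.Nonempty :=
      Set.nonempty_of_ncard_ne_zero (by rw [hT4]; norm_num)
    obtain ⟨d1, hd1⟩ := hTne
    have hsame : ∀ d' : H.Dart, d' ∈ T ↔ rot.SameCycle d1 d' := by
      intro d'
      constructor
      · intro hd'
        exact S.emb.rot_single_cycle d1 d' (hd1.trans hd'.symm)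
      · rintro ⟨m, hm⟩
        show d'.toProd.1 = Sum.inr z
        rw [← hm, htailz]
        exact hd1
    have hfix : ∀ d ∈ T, rot d ≠ d := by
      intro d hd hfd
      have hsub : T ⊆ {d} := by
        intro d' hd'
        obtain ⟨m, hm⟩ := ((hsame d).mp hd).symm.trans ((hsame d').mp hd')
        have := Function.IsFixedPt.perm_zpow (hfd : Function.IsFixedPt (⇑rot) d) m
        rw [this] at hm
        simp [← hm]
      have := Set.ncard_le_ncard hsub (Set.finite_singleton d)
      rw [hT4, Set.ncard_singleton] at this
      omega
    have hrotne : rot d1 ≠ d1 := hfix d1 hd1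
    have hsupp : ((rot.cycleOf d1).support : Set H.Dart) = T := by
      ext d'
      simp only [Finset.coe_sort_coe, Finset.mem_coe]
      rw [Equiv.Perm.mem_support_cycleOf_iff, Equiv.Perm.mem_support]
      exact ⟨fun h => (hsame d').mpr h.1, fun h => ⟨(hsame d').mp h, hrotne⟩⟩
    have hsuppcard : (rot.cycleOf d1).support.card = 4 := by
      rw [← Set.ncard_coe_finset, hsupp, hT4]
    have hcyc : (rot.cycleOf d1).IsCycle := rot.isCycle_cycleOf hrotne
    have h4 : (rot ^ 4) d1 = d1 := by
      rw [← Equiv.Perm.cycleOf_pow_apply_self rot d1 4]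
      have ho : orderOf (rot.cycleOf d1) = 4 := by rw [hcyc.orderOf, hsuppcard]
      rw [← ho, pow_orderOf_eq_one]
      rfl
    -- triangle structure at each dart of T
    have triAdj : ∀ d : H.Dart, d ∈ T → H.Adj d.toProd.2 ((rot⁻¹ d).toProd.2) := by
      intro d hd
      have hdz : d.toProd.1 = Sum.inr z := hd
      have hc3 : (faceOf H rot d).ncard ≤ 3 := hface d hdz
      have hFsupp : ((σ.cycleOf d).support : Set H.Dart) = faceOf H rot d := by
        ext d'
        simp only [Finset.coe_sort_coe, Finset.mem_coe]
        rw [Equiv.Perm.mem_support_cycleOf_iff, Equiv.Perm.mem_support]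
        have hmem : d' ∈ faceOf H rot d ↔ σ.SameCycle d d' := Iff.rfl
        rw [hmem]
        exact ⟨fun h => h.1, fun h => ⟨h, hσne d⟩⟩
      have hFcard : (σ.cycleOf d).support.card ≤ 3 := by
        rw [← Set.ncard_coe_finset, hFsupp]; exact hc3
      have hFcyc : (σ.cycleOf d).IsCycle := σ.isCycle_cycleOf (hσne d)
      have hF2 : 2 ≤ (σ.cycleOf d).support.card := hFcyc.two_le_card_support
      have hordc : (σ ^ (σ.cycleOf d).support.card) d = d := by
        rw [← Equiv.Perm.cycleOf_pow_apply_self σ d]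
        rw [← hFcyc.orderOf, pow_orderOf_eq_one]
        rfl
      interval_cases hcc : (σ.cycleOf d).support.card
      · -- card = 2 : contradiction
        exfalso
        have h2 : σ (σ d) = d := by
          have := hordc
          rwa [pow_succ, pow_one, Equiv.Perm.mul_apply] at this
        set e := σ d with hedef
        have hetail : e.toProd.1 = d.toProd.2 := by
          rw [hedef, hσapp, htail, Dart.symm_toProd]; rfl
        have hehead : e.toProd.2 = d.toProd.1 := by
          have : (σ e).toProd.1 = e.toProd.2 := by
            rw [hσapp, htail, Dart.symm_toProd]; rfl
          rw [h2] at this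
          exact this.symm
        have heq : e = d.symm := by
          apply Dart.toProd_injective
          rw [Dart.symm_toProd]
          exact Prod.ext hetail hehead
        have : rot d = d := by
          have := h2
          rw [heq, hσapp, Dart.symm_symm] at this
          exact this
        exact hfix d hd this
      · -- card = 3 : triangle, produce the adjacency
        have h3 : σ (σ (σ d)) = d := by
          have := hordc
          rwa [pow_succ, pow_succ, pow_one, Equiv.Perm.mul_apply,
            Equiv.Perm.mul_apply] at this
        set e1 := σ d with he1def
        set e2 := σ e1 with he2def
        have he2d : σ e2 = d := h3
        have he1tail : e1.toProd.1 = d.toProd.2 := by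
          rw [he1def, hσapp, htail, Dart.symm_toProd]; rfl
        have he2tail : e2.toProd.1 = e1.toProd.2 := by
          rw [he2def, hσapp, htail, Dart.symm_toProd]; rfl
        have he2head : e2.toProd.2 = d.toProd.1 := by
          have : (σ e2).toProd.1 = e2.toProd.2 := by
            rw [hσapp, htail, Dart.symm_toProd]; rfl
          rw [he2d] at this
          exact this.symm
        have hrote2 : rot e2.symm = d := by rw [← hσapp]; exact he2d
        have hinv : rot⁻¹ d = e2.symm := by
          rw [← hrote2, Equiv.Perm.inv_def, Equiv.symm_apply_apply]
        have : (rot⁻¹ d).toProd.2 = e1.toProd.2 := by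
          rw [hinv, Dart.symm_toProd]
          show e2.toProd.1 = e1.toProd.2
          exact he2tail
        rw [this, ← he1tail]
        exact e1.adj
    -- set up the four darts and their heads
    set d2 := rot d1 with hd2def
    set d3 := rot d2 with hd3def
    set d4 := rot d3 with hd4def
    have hd2T : d2 ∈ T := by show (rot d1).toProd.1 = Sum.inr z; rw [htail]; exact hd1
    have hd3T : d3 ∈ T := by show (rot d2).toProd.1 = Sum.inr z; rw [htail]; exact hd2T
    have hd4T : d4 ∈ T := by show (rot d3).toProd.1 = Sum.inr z; rw [htail]; exact hd3T
    have hrot41 : rot d4 = d1 := by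
      have : (rot ^ 4) d1 = rot (rot (rot (rot d1))) := by
        rw [show (4:ℕ) = 3+1 from rfl, pow_succ, pow_succ, pow_succ, pow_one]
        simp [Equiv.Perm.mul_apply]
      rw [this] at h4
      exact h4
    have hinv1 : rot⁻¹ d1 = d4 := by rw [← hrot41, Equiv.Perm.inv_def, Equiv.symm_apply_apply]
    have hinv2 : rot⁻¹ d2 = d1 := by rw [hd2def, Equiv.Perm.inv_def, Equiv.symm_apply_apply]
    have hinv3 : rot⁻¹ d3 = d2 := by rw [hd3def, Equiv.Perm.inv_def, Equiv.symm_apply_apply]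
    have hinv4 : rot⁻¹ d4 = d3 := by rw [hd4def, Equiv.Perm.inv_def, Equiv.symm_apply_apply]
    have headinl : ∀ d : H.Dart, d ∈ T → ∃ n : V, d.toProd.2 = Sum.inl n := by
      intro d hd
      rcases hh : d.toProd.2 with n | y
      · exact ⟨n, rfl⟩
      · exfalso
        apply S.fake_not_adjacent z y
        have := d.adj
        rwa [show d.toProd.1 = Sum.inr z from hd, hh] at this
    obtain ⟨n1, hn1⟩ := headinl d1 hd1
    obtain ⟨n2, hn2⟩ := headinl d2 hd2T
    obtain ⟨n3, hn3⟩ := headinl d3 hd3T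
    obtain ⟨n4, hn4⟩ := headinl d4 hd4T
    -- consecutive adjacencies in G
    have gAdjOf : ∀ (d : H.Dart) (a b : V), d ∈ T → d.toProd.2 = Sum.inl a →
        (rot⁻¹ d).toProd.2 = Sum.inl b → G.Adj a b := by
      intro d a b hd ha hb
      have := triAdj d hd
      rw [ha, hb] at this
      exact (S.adj_iff a b).mpr (Or.inl this)
    have g14 : G.Adj n1 n4 := gAdjOf d1 n1 n4 hd1 hn1 (by rw [hinv1]; exact hn4)
    have g21 : G.Adj n2 n1 := gAdjOf d2 n2 n1 hd2T hn2 (by rw [hinv2]; exact hn1)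
    have g32 : G.Adj n3 n2 := gAdjOf d3 n3 n2 hd3T hn3 (by rw [hinv3]; exact hn2)
    have g43 : G.Adj n4 n3 := gAdjOf d4 n4 n3 hd4T hn4 (by rw [hinv4]; exact hn3)
    -- crossing adjacencies
    have g13 : G.Adj n1 n3 := by
      refine (S.adj_iff n1 n3).mpr (Or.inr ⟨z, d1, ?_, ?_⟩)
      · exact Prod.ext hd1 hn1
      · exact Prod.ext hd3T hn3
    have g24 : G.Adj n2 n4 := by
      refine (S.adj_iff n2 n4).mpr (Or.inr ⟨z, d2, ?_, ?_⟩)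
      · exact Prod.ext hd2T hn2
      · exact Prod.ext hd4T hn4
    -- build the K4
    have hne12 : n1 ≠ n2 := g21.ne'
    have hne13 : n1 ≠ n3 := g13.ne
    have hne14 : n1 ≠ n4 := g14.ne
    have hne23 : n2 ≠ n3 := g32.ne'
    have hne24 : n2 ≠ n4 := g24.ne
    have hne34 : n3 ≠ n4 := g43.ne'
    apply hK4 {n1, n2, n3, n4}
    rw [SimpleGraph.isNClique_iff]
    constructor
    · intro a ha b hb hab
      simp only [Finset.coe_insert, Set.mem_insert_iff, Finset.coe_singleton,
        Set.mem_singleton_iff] at ha hb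
      rcases ha with rfl | rfl | rfl | rfl <;> rcases hb with rfl | rfl | rfl | rfl <;>
        first
          | exact absurd rfl hab
          | exact g21.symm | exact g13 | exact g14 | exact g21 | exact g32.symm
          | exact g24 | exact g13.symm | exact g32 | exact g43.symm | exact g14.symm
          | exact g24.symm | exact g43
    · rw [Finset.card_insert_of_notMem (by simp [hne12, hne13, hne14]),
        Finset.card_insert_of_notMem (by simp [hne23, hne24]),
        Finset.card_insert_of_notMem (by simp [hne34]),
        Finset.card_singleton]
  refine ⟨?_, key⟩
  have hterm : ∀ z : X, (-1 : ℤ) ≤ (S.aVal z : ℤ) - 2 := by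
    intro z
    have : (1 : ℤ) ≤ (S.aVal z : ℤ) := by exact_mod_cast key z
    omega
  calc -(Fintype.card X : ℤ) = ∑ _z : X, (-1 : ℤ) := by
        simp [Finset.card_univ]
    _ ≤ S.AVal := Finset.sum_le_sum fun z _ => hterm z
end
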